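/- Let s = (s_i)_{i≥0} be a non-decreasing sequence of positive integers with s_0 = 1, and let S be a step set that contains every horizontal step (a,0) with a ≥ 1 and satisfies the slope condition for s, i.e. for every (a,b) ∈ S with b > 0, every i ≥ 0 and every j with 1 ≤ j ≤ b one has b·(s_{i+j} − s_i + 1) > j·a. For m ≥ 0 let p_m be the number of S-paths from (0,0) to (s_m − 1, m) with boundary s, and let d_m be the number of S-paths from (0,0) to (s_m − 1, m) with boundary s whose last step (a,b) has b > 0 (in particular d_0 = 0). Then for every n ≥ 1, in ℤ: Σ_{j=0}^{s_n−1} a_{j,n} = p_n + Σ_{m=0}^{n−1} (2p_m − d_m) · Σ_{j=0}^{s_n−s_m−1} a_{j,n−m}. -/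

import Mathlib

/-- x-coordinate of the `j`-th node of the path `p` (partial sum of first coordinates). -/
def xPart (p : List (ℕ × ℕ)) (j : ℕ) : ℕ := ((p.take j).map Prod.fst).sum

/-- y-coordinate of the `j`-th node of the path `p` (partial sum of second coordinates). -/
def yPart (p : List (ℕ × ℕ)) (j : ℕ) : ℕ := ((p.take j).map Prod.snd).sum

/-- `p` is an `S`-path from `(0,0)` to `(n,m)`. -/
def IsPath (S : Set (ℕ × ℕ)) (n m : ℕ) (p : List (ℕ × ℕ)) : Prop :=
  (∀ st ∈ p, st ∈ S) ∧ xPart p p.length = n ∧ yPart p p.length = m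

/-- `p` has (right) boundary `s`: every node `(x, i)` satisfies `x < s i`. -/
def HasBoundary (s : ℕ → ℕ) (p : List (ℕ × ℕ)) : Prop :=
  ∀ j ≤ p.length, xPart p j < s (yPart p j)

/-- The number of `S`-paths from `(0,0)` to `(n,m)`. -/
noncomputable def aCount (S : Set (ℕ × ℕ)) (n m : ℕ) : ℕ :=
  Set.ncard {p : List (ℕ × ℕ) | IsPath S n m p}

lemma xPart_append (p q : List (ℕ × ℕ)) (j : ℕ) :
    xPart (p ++ q) j = xPart p j + xPart q (j - p.length) := by
  simp [xPart, List.take_append]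

lemma yPart_append (p q : List (ℕ × ℕ)) (j : ℕ) :
    yPart (p ++ q) j = yPart p j + yPart q (j - p.length) := by
  simp [yPart, List.take_append]

lemma xPart_take (p : List (ℕ × ℕ)) (k j : ℕ) :
    xPart (p.take k) j = xPart p (min j k) := by
  simp [xPart, List.take_take]

lemma yPart_take (p : List (ℕ × ℕ)) (k j : ℕ) :
    yPart (p.take k) j = yPart p (min j k) := by
  simp [yPart, List.take_take]

lemma xPart_of_length_le (p : List (ℕ × ℕ)) {j : ℕ} (h : p.length ≤ j) :
    xPart p j = xPart p p.length := by
  simp [xPart, List.take_of_length_le h, List.take_length]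

lemma yPart_of_length_le (p : List (ℕ × ℕ)) {j : ℕ} (h : p.length ≤ j) :
    yPart p j = yPart p p.length := by
  simp [yPart, List.take_of_length_le h, List.take_length]

lemma sum_map_add (l : List (ℕ × ℕ)) :
    (l.map (fun st => st.1 + st.2)).sum = (l.map Prod.fst).sum + (l.map Prod.snd).sum := by
  induction l with
  | nil => simp
  | cons a t ih => simp only [List.map_cons, List.sum_cons, ih]; omega

lemma xPart_succ (p : List (ℕ × ℕ)) (j : ℕ) (h : j < p.length) :
    xPart p (j+1) = xPart p j + (p.get ⟨j, h⟩).1 := by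
  unfold xPart
  rw [List.take_succ, List.map_append, List.sum_append, List.getElem?_eq_getElem h]
  simp

lemma yPart_succ (p : List (ℕ × ℕ)) (j : ℕ) (h : j < p.length) :
    yPart p (j+1) = yPart p j + (p.get ⟨j, h⟩).2 := by
  unfold yPart
  rw [List.take_succ, List.map_append, List.sum_append, List.getElem?_eq_getElem h]
  simp

lemma length_le_sum (l : List ℕ) (h : ∀ x ∈ l, 1 ≤ x) : l.length ≤ l.sum := by
  induction l with
  | nil => simp
  | cons a t ih =>
    simp only [List.length_cons, List.sum_cons]
    have := h a (by simp)
    have := ih (fun x hx => h x (by simp [hx]))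
    omega

lemma pathSet_finite (S : Set (ℕ × ℕ)) (h00 : (0,0) ∉ S) (x y : ℕ) :
    {p : List (ℕ × ℕ) | IsPath S x y p}.Finite := by
  classical
  have hfin : ({l : List (Fin (x+1) × Fin (y+1)) | l.length ≤ x + y}).Finite :=
    List.finite_length_le _ _
  have himg : {p : List (ℕ × ℕ) | IsPath S x y p} ⊆
      (fun l : List (Fin (x+1) × Fin (y+1)) =>
        l.map (fun st => ((st.1 : ℕ), (st.2 : ℕ)))) '' {l | l.length ≤ x + y} := by
    intro p hp
    obtain ⟨hS, hx, hy⟩ := hp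
    have hxs : (p.map Prod.fst).sum = x := by simpa [xPart, List.take_length] using hx
    have hys : (p.map Prod.snd).sum = y := by simpa [yPart, List.take_length] using hy
    have hb1 : ∀ st ∈ p, st.1 ≤ x := by
      intro st hst
      rw [← hxs]
      exact List.single_le_sum (by simp) _ (List.mem_map_of_mem (f := Prod.fst) hst)
    have hb2 : ∀ st ∈ p, st.2 ≤ y := by
      intro st hst
      rw [← hys]
      exact List.single_le_sum (by simp) _ (List.mem_map_of_mem (f := Prod.snd) hst)
    refine ⟨p.map (fun st => (⟨min st.1 x, by omega⟩, ⟨min st.2 y, by omega⟩)), ?_, ?_⟩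
    · simp only [Set.mem_setOf_eq, List.length_map]
      calc p.length ≤ (p.map (fun st => st.1 + st.2)).sum := by
            rw [← List.length_map (as := p) (fun st => st.1 + st.2)]
            refine length_le_sum _ ?_
            intro v hv
            obtain ⟨st, hst, rfl⟩ := List.mem_map.1 hv
            have : st ≠ (0,0) := fun h => h00 (h ▸ hS st hst)
            rcases st with ⟨a, b⟩
            simp only
            by_contra hc
            push_neg at hc
            have ha : a = 0 := by omega
            have hb : b = 0 := by omega
            exact absurd (by rw [ha, hb]) this
        _ = x + y := by rw [← hxs, ← hys, sum_map_add]
    · simp only [List.map_map]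
      conv_rhs => rw [← List.map_id p]
      refine List.map_congr_left ?_
      intro st hst
      have h1 := hb1 st hst
      have h2 := hb2 st hst
      simp only [Function.comp, id]
      rcases st with ⟨a,b⟩
      simp only at h1 h2 ⊢
      congr 1 <;> omega
  exact (hfin.image _).subset himg

lemma ncard_prod' {α β : Type*} (A : Set α) (B : Set β) :
    (A ×ˢ B).ncard = A.ncard * B.ncard := by
  rw [← Nat.card_coe_set_eq, ← Nat.card_coe_set_eq, ← Nat.card_coe_set_eq,
    Nat.card_congr (Equiv.Set.prod A B), Nat.card_prod]

lemma ncard_biUnion' {ι α : Type*} (t : Finset ι) (f : ι → Set α)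
    (hfin : ∀ i ∈ t, (f i).Finite)
    (hdisj : ∀ i ∈ t, ∀ j ∈ t, i ≠ j → Disjoint (f i) (f j)) :
    (⋃ i ∈ t, f i).ncard = ∑ i ∈ t, (f i).ncard := by
  classical
  induction t using Finset.induction with
  | empty => simp
  | @insert a t ha ih =>
    rw [Finset.sum_insert ha]
    have h1 : (⋃ i ∈ insert a t, f i) = f a ∪ ⋃ i ∈ t, f i := by
      simp [Set.biUnion_insert]
    have hfin2 : (⋃ i ∈ t, f i).Finite := by
      exact Set.Finite.biUnion t.finite_toSet
        (fun i hi => hfin i (Finset.mem_insert_of_mem (by simpa using hi)))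
    have hd2 : Disjoint (f a) (⋃ i ∈ t, f i) := by
      exact Set.disjoint_iUnion₂_right.2 fun i hi =>
        hdisj a (by simp) i (Finset.mem_insert_of_mem (by simpa using hi))
          (fun h => ha (by simpa [h] using hi))
    rw [h1, Set.ncard_union_eq hd2 (hfin a (by simp)) hfin2,
      ih (fun i hi => hfin i (by simp [hi]))
        (fun i hi j hj hij => hdisj i (by simp [hi]) j (by simp [hj]) hij)]

/-! ### Definitions -/

def pathSet (S : Set (ℕ × ℕ)) (x y : ℕ) : Set (List (ℕ × ℕ)) := {p | IsPath S x y p}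
def goodSet (s : ℕ → ℕ) (S : Set (ℕ × ℕ)) (x y : ℕ) : Set (List (ℕ × ℕ)) :=
  {p | IsPath S x y p ∧ HasBoundary s p}
def badSet (s : ℕ → ℕ) (S : Set (ℕ × ℕ)) (x y : ℕ) : Set (List (ℕ × ℕ)) :=
  {p | IsPath S x y p ∧ ¬ HasBoundary s p}
def goodLevel (s : ℕ → ℕ) (S : Set (ℕ × ℕ)) (m : ℕ) : Set (List (ℕ × ℕ)) :=
  {q | (∀ st ∈ q, st ∈ S) ∧ yPart q q.length = m ∧ HasBoundary s q}
noncomputable def bC (s : ℕ → ℕ) (S : Set (ℕ × ℕ)) (x y : ℕ) : ℕ := (goodSet s S x y).ncard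
noncomputable def gC (s : ℕ → ℕ) (S : Set (ℕ × ℕ)) (m : ℕ) : ℕ :=
  ∑ w ∈ Finset.range (s m), bC s S w m
noncomputable def TCnt (S : Set (ℕ × ℕ)) (n K : ℕ) : ℕ := ∑ j ∈ Finset.range K, aCount S j n

lemma xPart_zero (p : List (ℕ × ℕ)) : xPart p 0 = 0 := by simp [xPart]
lemma yPart_zero (p : List (ℕ × ℕ)) : yPart p 0 = 0 := by simp [yPart]

lemma xPart_prefix (q l : List (ℕ × ℕ)) {j : ℕ} (h : j ≤ q.length) :
    xPart (q ++ l) j = xPart q j := by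
  rw [xPart_append, Nat.sub_eq_zero_of_le h, xPart_zero, add_zero]

lemma yPart_prefix (q l : List (ℕ × ℕ)) {j : ℕ} (h : j ≤ q.length) :
    yPart (q ++ l) j = yPart q j := by
  rw [yPart_append, Nat.sub_eq_zero_of_le h, yPart_zero, add_zero]

lemma sum_take_le (l : List ℕ) (j : ℕ) : (l.take j).sum ≤ l.sum := by
  conv_rhs => rw [← List.take_append_drop j l]
  rw [List.sum_append]
  exact Nat.le_add_right _ _

lemma xPart_le_total (p : List (ℕ × ℕ)) (j : ℕ) : xPart p j ≤ xPart p p.length := by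
  have h1 : xPart p j = ((p.map Prod.fst).take j).sum := by simp [xPart, List.map_take]
  have h2 : xPart p p.length = (p.map Prod.fst).sum := by simp [xPart]
  rw [h1, h2]; exact sum_take_le _ _

lemma yPart_le_total (p : List (ℕ × ℕ)) (j : ℕ) : yPart p j ≤ yPart p p.length := by
  have h1 : yPart p j = ((p.map Prod.snd).take j).sum := by simp [yPart, List.map_take]
  have h2 : yPart p p.length = (p.map Prod.snd).sum := by simp [yPart]
  rw [h1, h2]; exact sum_take_le _ _

/-- Vertical-ish step from a good node lands on a good node. -/
lemma step_good {s : ℕ → ℕ} {S : Set (ℕ × ℕ)} (hmono : Monotone s)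
    (hslope : ∀ a b : ℕ, (a, b) ∈ S → 0 < b →
      ∀ i j : ℕ, 1 ≤ j → j ≤ b → j * a < b * (s (i + j) - s i + 1))
    {a b x i : ℕ} (hmem : (a, b) ∈ S) (hb : 0 < b) (hx : x < s i) :
    x + a < s (i + b) := by
  have h := hslope a b hmem hb i b hb le_rfl
  have hm := hmono (Nat.le_add_right i b)
  have : b * a < b * (s (i + b) - s i + 1) := h
  have ha : a < s (i + b) - s i + 1 := lt_of_mul_lt_mul_left this (Nat.zero_le b)
  omega

/-- Uniqueness of the split position. -/
lemma split_len_aux {s : ℕ → ℕ} {p q₁ q₂ r₁ r₂ : List (ℕ × ℕ)} {st₁ st₂ : ℕ × ℕ}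
    (h1 : p = q₁ ++ st₁ :: r₁) (h2 : p = q₂ ++ st₂ :: r₂)
    (hb2 : HasBoundary s q₂)
    (hv1 : s (yPart p (q₁.length + 1)) ≤ xPart p (q₁.length + 1))
    (hlt : q₁.length < q₂.length) : False := by
  set j := q₁.length + 1 with hj
  have hjle : j ≤ q₂.length := by omega
  have hx : xPart p j = xPart q₂ j := by rw [h2, xPart_prefix _ _ hjle]
  have hy : yPart p j = yPart q₂ j := by rw [h2, yPart_prefix _ _ hjle]
  have := hb2 j hjle
  rw [hx, hy] at hv1
  omega

lemma split_len_unique {s : ℕ → ℕ} {p q₁ q₂ r₁ r₂ : List (ℕ × ℕ)} {st₁ st₂ : ℕ × ℕ}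
    (h1 : p = q₁ ++ st₁ :: r₁) (h2 : p = q₂ ++ st₂ :: r₂)
    (hb1 : HasBoundary s q₁) (hb2 : HasBoundary s q₂)
    (hv1 : s (yPart p (q₁.length + 1)) ≤ xPart p (q₁.length + 1))
    (hv2 : s (yPart p (q₂.length + 1)) ≤ xPart p (q₂.length + 1)) :
    q₁.length = q₂.length := by
  rcases lt_trichotomy q₁.length q₂.length with h | h | h
  · exact absurd (split_len_aux h1 h2 hb2 hv1 h) id
  · exact h
  · exact absurd (split_len_aux h2 h1 hb1 hv2 h) id

section counts
variable {s : ℕ → ℕ} {S : Set (ℕ × ℕ)}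

lemma goodSet_subset (x y : ℕ) : goodSet s S x y ⊆ pathSet S x y := fun p hp => hp.1
lemma badSet_subset (x y : ℕ) : badSet s S x y ⊆ pathSet S x y := fun p hp => hp.1

lemma goodSet_finite (h00 : (0,0) ∉ S) (x y : ℕ) : (goodSet s S x y).Finite :=
  (pathSet_finite S h00 x y).subset (goodSet_subset x y)

lemma badSet_finite (h00 : (0,0) ∉ S) (x y : ℕ) : (badSet s S x y).Finite :=
  (pathSet_finite S h00 x y).subset (badSet_subset x y)

lemma goodLevel_eq_biUnion (m : ℕ) :
    goodLevel s S m = ⋃ w ∈ Finset.range (s m), goodSet s S w m := by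
  ext q
  constructor
  · rintro ⟨hS, hy, hb⟩
    have hw : xPart q q.length < s m := by
      have := hb q.length le_rfl
      rwa [hy] at this
    refine Set.mem_biUnion (show xPart q q.length ∈ Finset.range (s m) by
      simpa using hw) ⟨⟨hS, rfl, hy⟩, hb⟩
  · rintro hq
    obtain ⟨w, _, ⟨⟨hS, hx, hy⟩, hb⟩⟩ := Set.mem_iUnion₂.1 hq
    exact ⟨hS, hy, hb⟩

lemma goodLevel_finite (h00 : (0,0) ∉ S) (m : ℕ) : (goodLevel s S m).Finite := by
  rw [goodLevel_eq_biUnion]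
  exact Set.Finite.biUnion (Finset.range (s m)).finite_toSet
    (fun w _ => goodSet_finite h00 w m)

lemma goodSet_pairwise_disj {y : ℕ} {w w' : ℕ} (h : w ≠ w') :
    Disjoint (goodSet s S w y) (goodSet s S w' y) := by
  rw [Set.disjoint_left]
  rintro p ⟨⟨_, hx, _⟩, _⟩ ⟨⟨_, hx', _⟩, _⟩
  exact h (hx ▸ hx')

lemma ncard_goodLevel (h00 : (0,0) ∉ S) (m : ℕ) : (goodLevel s S m).ncard = gC s S m := by
  rw [goodLevel_eq_biUnion]
  rw [ncard_biUnion' _ _ (fun w _ => goodSet_finite h00 w m)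
    (fun w _ w' _ h => goodSet_pairwise_disj h)]
  rfl

lemma aCount_split (h00 : (0,0) ∉ S) (x n : ℕ) :
    aCount S x n = bC s S x n + (badSet s S x n).ncard := by
  have hsplit : pathSet S x n = goodSet s S x n ∪ badSet s S x n := by
    ext p
    constructor
    · intro hp
      by_cases hb : HasBoundary s p
      · exact Or.inl ⟨hp, hb⟩
      · exact Or.inr ⟨hp, hb⟩
    · rintro (⟨hp, _⟩ | ⟨hp, _⟩) <;> exact hp
  have : aCount S x n = (pathSet S x n).ncard := rfl
  rw [this, hsplit, Set.ncard_union_eq ?disj (goodSet_finite h00 x n) (badSet_finite h00 x n)]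
  · rfl
  case disj =>
    rw [Set.disjoint_left]
    rintro p ⟨_, hb⟩ ⟨_, hnb⟩
    exact hnb hb

lemma pathSet_zero (h00 : (0,0) ∉ S) : pathSet S 0 0 = {([] : List (ℕ × ℕ))} := by
  ext p
  constructor
  · rintro ⟨hS, hx, hy⟩
    cases p with
    | nil => rfl
    | cons st t =>
      exfalso
      have hxs : ((st :: t).map Prod.fst).sum = 0 := by
        simpa [xPart, List.take_length] using hx
      have hys : ((st :: t).map Prod.snd).sum = 0 := by
        simpa [yPart, List.take_length] using hy
      simp only [List.map_cons, List.sum_cons, Nat.add_eq_zero] at hxs hys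
      have : st = (0,0) := by
        rcases st with ⟨a,b⟩
        have := hxs.1; have := hys.1
        simp_all
      exact h00 (this ▸ hS st (by simp))
  · rintro rfl
    exact ⟨by simp, by simp [xPart], by simp [yPart]⟩

lemma goodSet_zero (h00 : (0,0) ∉ S) (hs0 : s 0 = 1) :
    goodSet s S 0 0 = {([] : List (ℕ × ℕ))} := by
  apply Set.eq_of_subset_of_subset
  · exact fun p hp => (pathSet_zero h00) ▸ (goodSet_subset 0 0 hp)
  · rintro p rfl
    have hmem : ([] : List (ℕ × ℕ)) ∈ pathSet S 0 0 := by
      rw [pathSet_zero h00]; rfl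
    refine ⟨hmem, ?_⟩
    intro j hj
    simp only [List.length_nil, Nat.le_zero] at hj
    subst hj
    simp [xPart_zero, yPart_zero, hs0]

end counts

def phiMap (u : ℕ) (qr : List (ℕ × ℕ) × List (ℕ × ℕ)) : List (ℕ × ℕ) :=
  qr.1 ++ (u - xPart qr.1 qr.1.length, 0) :: qr.2

lemma xPart_cons (st : ℕ × ℕ) (r : List (ℕ × ℕ)) (j : ℕ) :
    xPart (st :: r) (j+1) = st.1 + xPart r j := by
  simp [xPart, List.take_succ_cons]

lemma yPart_cons (st : ℕ × ℕ) (r : List (ℕ × ℕ)) (j : ℕ) :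
    yPart (st :: r) (j+1) = st.2 + yPart r j := by
  simp [yPart, List.take_succ_cons]

section master
variable {s : ℕ → ℕ} {S : Set (ℕ × ℕ)}

lemma phi_props (hhoriz : ∀ a : ℕ, 1 ≤ a → (a, 0) ∈ S)
    {x n m u : ℕ} (hmu : s m ≤ u) (hux : u ≤ x) (hmn : m ≤ n)
    {q r : List (ℕ × ℕ)} (hq : q ∈ goodLevel s S m) (hr : r ∈ pathSet S (x - u) (n - m)) :
    phiMap u (q, r) ∈ badSet s S x n ∧
      xPart (phiMap u (q, r)) (q.length + 1) = u ∧
      yPart (phiMap u (q, r)) (q.length + 1) = m := by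
  obtain ⟨hqS, hqy, hqb⟩ := hq
  obtain ⟨hrS, hrx, hry⟩ := hr
  set w := xPart q q.length with hw
  have hwlt : w < s m := by
    have := hqb q.length le_rfl
    rwa [hqy] at this
  set st : ℕ × ℕ := (u - w, 0) with hst
  have hstS : st ∈ S := hhoriz _ (by omega)
  set p := phiMap u (q, r) with hp
  have hpdef : p = q ++ st :: r := rfl
  have hplen : p.length = q.length + (r.length + 1) := by
    rw [hpdef]; simp
  have hnode_x : xPart p (q.length + 1) = u := by
    rw [hpdef, xPart_append, xPart_of_length_le q (Nat.le_succ _)]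
    have : q.length + 1 - q.length = 1 := by omega
    rw [this]
    have : xPart (st :: r) 1 = st.1 := by
      have := xPart_cons st r 0
      simpa [xPart_zero] using this
    rw [this, hst, ← hw]
    simp only
    omega
  have hnode_y : yPart p (q.length + 1) = m := by
    rw [hpdef, yPart_append, yPart_of_length_le q (Nat.le_succ _)]
    have h1 : q.length + 1 - q.length = 1 := by omega
    rw [h1]
    have : yPart (st :: r) 1 = st.2 := by
      have := yPart_cons st r 0
      simpa [yPart_zero] using this
    rw [this, hst, hqy]
    simp
  have hxtot : xPart p p.length = x := by
    rw [hpdef, xPart_append, xPart_of_length_le q (by rw [← hpdef, hplen]; omega)]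
    have : p.length - q.length = r.length + 1 := by omega
    rw [← hpdef, this, xPart_cons, xPart_of_length_le r le_rfl] at *
    rw [hrx, hst, ← hw]
    simp only
    omega
  have hytot : yPart p p.length = n := by
    rw [hpdef, yPart_append, yPart_of_length_le q (by rw [← hpdef, hplen]; omega)]
    have : p.length - q.length = r.length + 1 := by omega
    rw [← hpdef, this, yPart_cons, yPart_of_length_le r le_rfl] at *
    rw [hry, hst, hqy]
    simp only
    omega
  refine ⟨⟨⟨?_, hxtot, hytot⟩, ?_⟩, hnode_x, hnode_y⟩
  · intro st' hst'
    rw [hpdef] at hst'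
    rcases List.mem_append.1 hst' with h | h
    · exact hqS st' h
    · rcases List.mem_cons.1 h with h | h
      · exact h ▸ hstS
      · exact hrS st' h
  · intro hb
    have := hb (q.length + 1) (by rw [hplen]; omega)
    rw [hnode_x, hnode_y] at this
    omega

lemma first_viol_split (hs0 : s 0 = 1) (hmono : Monotone s)
    (hslope : ∀ a b : ℕ, (a, b) ∈ S → 0 < b →
      ∀ i j : ℕ, 1 ≤ j → j ≤ b → j * a < b * (s (i + j) - s i + 1))
    {x n : ℕ} {p : List (ℕ × ℕ)} (hp : p ∈ badSet s S x n) :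
    ∃ m u q r, m ≤ n ∧ s m ≤ u ∧ u ≤ x ∧ q ∈ goodLevel s S m ∧
      r ∈ pathSet S (x - u) (n - m) ∧ p = phiMap u (q, r) := by
  classical
  obtain ⟨⟨hS, hx, hy⟩, hnb⟩ := hp
  have hex : ∃ j, j ≤ p.length ∧ s (yPart p j) ≤ xPart p j := by
    unfold HasBoundary at hnb
    push_neg at hnb
    obtain ⟨j, hj1, hj2⟩ := hnb
    exact ⟨j, hj1, by omega⟩
  have hJ := Nat.find_spec hex
  have hmin : ∀ j < Nat.find hex, ¬ (j ≤ p.length ∧ s (yPart p j) ≤ xPart p j) :=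
    fun j hj => Nat.find_min hex hj
  have hJ0 : Nat.find hex ≠ 0 := by
    intro h0
    rw [h0, xPart_zero, yPart_zero, hs0] at hJ
    omega
  obtain ⟨K, hK⟩ : ∃ K, Nat.find hex = K + 1 :=
    ⟨Nat.find hex - 1, (Nat.succ_pred_eq_of_ne_zero hJ0).symm⟩
  rw [hK] at hJ hmin
  have hKlen : K < p.length := by have := hJ.1; omega
  have hgood : ∀ j ≤ K, xPart p j < s (yPart p j) := by
    intro j hj
    have h1 := hmin j (by omega)
    push_neg at h1
    have := h1 (by omega)
    omega
  set st := p.get ⟨K, hKlen⟩ with hstdef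
  have hstS : st ∈ S := hS st (List.get_mem p ⟨K, hKlen⟩)
  have hxs : xPart p (K+1) = xPart p K + st.1 := xPart_succ p K hKlen
  have hys : yPart p (K+1) = yPart p K + st.2 := yPart_succ p K hKlen
  have hviol : s (yPart p (K+1)) ≤ xPart p (K+1) := hJ.2
  have hst2 : st.2 = 0 := by
    by_contra h2
    have h2' : 0 < st.2 := Nat.pos_of_ne_zero h2
    have hgK := hgood K le_rfl
    have := step_good hmono hslope (show (st.1, st.2) ∈ S by simpa using hstS) h2' hgK
    rw [hxs, hys] at hviol
    omega
  set q := p.take K with hqdef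
  set r := p.drop (K+1) with hrdef
  have hqlen : q.length = K := by
    rw [hqdef, List.length_take]; omega
  have hsplit : p = q ++ st :: r := by
    conv_lhs => rw [← List.take_append_drop K p]
    rw [List.drop_eq_getElem_cons hKlen]
    rfl
  have hqx : xPart q q.length = xPart p K := by
    rw [hqdef, xPart_take, hqlen]; simp
  have hqy : yPart q q.length = yPart p K := by
    rw [hqdef, yPart_take, hqlen]; simp
  have hqmem : q ∈ goodLevel s S (yPart p (K+1)) := by
    refine ⟨fun st' h => hS st' (List.mem_of_mem_take h), ?_, ?_⟩
    · rw [hqy, hys, hst2, add_zero]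
    · intro j hj
      rw [hqlen] at hj
      have h1 : xPart q j = xPart p j := by
        rw [hqdef, xPart_take]; congr 1; omega
      have h2 : yPart q j = yPart p j := by
        rw [hqdef, yPart_take]; congr 1; omega
      rw [h1, h2]
      exact hgood j hj
  have hmn : yPart p (K+1) ≤ n := by
    rw [← hy]; exact yPart_le_total p (K+1)
  have hux : xPart p (K+1) ≤ x := by
    rw [← hx]; exact xPart_le_total p (K+1)
  have hL : (q ++ st :: r).length - q.length = r.length + 1 := by simp
  have hx' := hx
  rw [hsplit] at hx'
  rw [xPart_append, hL, xPart_cons, xPart_of_length_le r le_rfl,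
    xPart_of_length_le q (by simp), hqx] at hx'
  have hy' := hy
  rw [hsplit] at hy'
  rw [yPart_append, hL, yPart_cons, yPart_of_length_le r le_rfl,
    yPart_of_length_le q (by simp), hqy] at hy'
  have hrmem : r ∈ pathSet S (x - xPart p (K+1)) (n - yPart p (K+1)) := by
    refine ⟨fun st' h => hS st' (List.mem_of_mem_drop h), ?_, ?_⟩
    · rw [hxs]; omega
    · rw [hys]; omega
  refine ⟨yPart p (K+1), xPart p (K+1), q, r, hmn, hviol, hux, hqmem, hrmem, ?_⟩
  have hstpair : (xPart p (K+1) - xPart q q.length, (0:ℕ)) = st := by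
    rw [hqx, hxs]
    have h1 : xPart p K + st.1 - xPart p K = st.1 := by omega
    rw [h1, ← hst2]
  show p = q ++ (xPart p (K+1) - xPart q q.length, 0) :: r
  rw [hstpair, ← hsplit]

lemma split_unique {x n : ℕ} {m u m' u' : ℕ}
    (hmu : s m ≤ u) (hux : u ≤ x) (hmn : m ≤ n)
    (hmu' : s m' ≤ u') (hux' : u' ≤ x) (hmn' : m' ≤ n)
    (hhoriz : ∀ a : ℕ, 1 ≤ a → (a, 0) ∈ S)
    {q r q' r' : List (ℕ × ℕ)}
    (hq : q ∈ goodLevel s S m) (hr : r ∈ pathSet S (x - u) (n - m))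
    (hq' : q' ∈ goodLevel s S m') (hr' : r' ∈ pathSet S (x - u') (n - m'))
    (heq : phiMap u (q, r) = phiMap u' (q', r')) :
    m = m' ∧ u = u' ∧ q = q' ∧ r = r' := by
  obtain ⟨hbad, hnx, hny⟩ := phi_props hhoriz hmu hux hmn hq hr
  obtain ⟨hbad', hnx', hny'⟩ := phi_props hhoriz hmu' hux' hmn' hq' hr'
  rw [← heq] at hnx' hny'
  have hpdef' : phiMap u (q, r) = q' ++ (u' - xPart q' q'.length, 0) :: r' := heq
  have hlen : q.length = q'.length := by
    refine split_len_unique (s := s) (p := phiMap u (q, r)) (q₁ := q) (q₂ := q')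
      (r₁ := r) (r₂ := r') (st₁ := (u - xPart q q.length, 0))
      (st₂ := (u' - xPart q' q'.length, 0)) rfl hpdef' hq.2.2 hq'.2.2 ?_ ?_
    · rw [hnx, hny]; exact hmu
    · rw [hnx', hny']; exact hmu'
  have heq2 : q ++ (u - xPart q q.length, 0) :: r
      = q' ++ (u' - xPart q' q'.length, 0) :: r' := heq
  obtain ⟨hqq, hrr⟩ := List.append_inj heq2 hlen
  have hmm : m = m' := by rw [← hq.2.1, ← hq'.2.1, hqq]
  have huu : u = u' := by rw [← hnx, ← hnx', hlen]
  have hrr2 : r = r' := by injection hrr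
  exact ⟨hmm, huu, hqq, hrr2⟩

end master

section mastercount
variable {s : ℕ → ℕ} {S : Set (ℕ × ℕ)}

lemma ncard_badSet (h00 : (0,0) ∉ S) (hs0 : s 0 = 1) (hmono : Monotone s)
    (hhoriz : ∀ a : ℕ, 1 ≤ a → (a, 0) ∈ S)
    (hslope : ∀ a b : ℕ, (a, b) ∈ S → 0 < b →
      ∀ i j : ℕ, 1 ≤ j → j ≤ b → j * a < b * (s (i + j) - s i + 1))
    (x n : ℕ) :
    (badSet s S x n).ncard =
      ∑ m ∈ Finset.range (n+1), ∑ u ∈ Finset.Icc (s m) x,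
        gC s S m * aCount S (x - u) (n - m) := by
  classical
  set F : (Σ _ : ℕ, ℕ) → Set (List (ℕ × ℕ)) := fun mu =>
    phiMap mu.2 '' ((goodLevel s S mu.1) ×ˢ (pathSet S (x - mu.2) (n - mu.1))) with hF
  set t : Finset (Σ _ : ℕ, ℕ) :=
    (Finset.range (n+1)).sigma (fun m => Finset.Icc (s m) x) with ht
  have hmem : ∀ mu : (Σ _ : ℕ, ℕ), mu ∈ t ↔
      (mu.1 ≤ n ∧ s mu.1 ≤ mu.2 ∧ mu.2 ≤ x) := by
    intro mu
    rw [ht, Finset.mem_sigma, Finset.mem_range, Finset.mem_Icc]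
    omega
  have hcover : badSet s S x n = ⋃ mu ∈ t, F mu := by
    ext p
    constructor
    · intro hp
      obtain ⟨m, u, q, r, hmn, hmu, hux, hq, hr, hpe⟩ :=
        first_viol_split hs0 hmono hslope hp
      refine Set.mem_biUnion ((hmem ⟨m, u⟩).2 ⟨hmn, hmu, hux⟩) ?_
      exact ⟨(q, r), Set.mk_mem_prod hq hr, hpe.symm⟩
    · intro hp
      obtain ⟨mu, hmu_t, hpF⟩ := Set.mem_iUnion₂.1 hp
      obtain ⟨hmn, hsu, hux⟩ := (hmem mu).1 hmu_t
      obtain ⟨⟨q, r⟩, hqr, hpe⟩ := hpF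
      rw [← hpe]
      exact (phi_props hhoriz hsu hux hmn hqr.1 hqr.2).1
  have hfin : ∀ mu ∈ t, (F mu).Finite := by
    intro mu _
    exact Set.Finite.image _ (((goodLevel_finite h00 mu.1)).prod (pathSet_finite S h00 _ _))
  have hdisj : ∀ mu ∈ t, ∀ mu' ∈ t, mu ≠ mu' → Disjoint (F mu) (F mu') := by
    intro mu hmu1 mu' hmu2 hne
    obtain ⟨h1, h2, h3⟩ := (hmem mu).1 hmu1
    obtain ⟨h1', h2', h3'⟩ := (hmem mu').1 hmu2
    rw [Set.disjoint_left]
    rintro p ⟨⟨q, r⟩, hqr, hpe⟩ ⟨⟨q', r'⟩, hqr', hpe'⟩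
    obtain ⟨hm, hu, _, _⟩ := split_unique h2 h3 h1 h2' h3' h1' hhoriz
      hqr.1 hqr.2 hqr'.1 hqr'.2 (hpe.trans hpe'.symm)
    exact hne (Sigma.ext hm (heq_of_eq hu))
  have hcard : ∀ mu ∈ t, (F mu).ncard = gC s S mu.1 * aCount S (x - mu.2) (n - mu.1) := by
    intro mu hmu_t
    obtain ⟨h1, h2, h3⟩ := (hmem mu).1 hmu_t
    have hinj : Set.InjOn (phiMap mu.2)
        ((goodLevel s S mu.1) ×ˢ (pathSet S (x - mu.2) (n - mu.1))) := by
      rintro ⟨q, r⟩ hqr ⟨q', r'⟩ hqr' heq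
      obtain ⟨_, _, hq, hr⟩ := split_unique h2 h3 h1 h2 h3 h1 hhoriz
        hqr.1 hqr.2 hqr'.1 hqr'.2 heq
      rw [Prod.ext_iff]; exact ⟨hq, hr⟩
    rw [hF]
    simp only
    rw [Set.ncard_image_of_injOn hinj, ncard_prod', ncard_goodLevel h00]
    rfl
  rw [hcover, ncard_biUnion' t F hfin hdisj, ht, Finset.sum_sigma]
  exact Finset.sum_congr rfl (fun m hm => Finset.sum_congr rfl
    (fun u hu => hcard ⟨m, u⟩ (Finset.mem_sigma.2 ⟨hm, hu⟩)))

/-- Pointwise master decomposition. -/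
lemma master_pointwise (h00 : (0,0) ∉ S) (hs0 : s 0 = 1) (hmono : Monotone s)
    (hhoriz : ∀ a : ℕ, 1 ≤ a → (a, 0) ∈ S)
    (hslope : ∀ a b : ℕ, (a, b) ∈ S → 0 < b →
      ∀ i j : ℕ, 1 ≤ j → j ≤ b → j * a < b * (s (i + j) - s i + 1))
    (x n : ℕ) :
    aCount S x n = bC s S x n +
      ∑ m ∈ Finset.range (n+1), ∑ u ∈ Finset.Icc (s m) x,
        gC s S m * aCount S (x - u) (n - m) := by
  rw [aCount_split h00 x n, ncard_badSet h00 hs0 hmono hhoriz hslope x n]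

end mastercount

section lemma2
variable {s : ℕ → ℕ} {S : Set (ℕ × ℕ)}

def vertSet (s : ℕ → ℕ) (S : Set (ℕ × ℕ)) (m : ℕ) : Set (List (ℕ × ℕ)) :=
  {p | IsPath S (s m - 1) m p ∧ HasBoundary s p ∧
    ∃ st : ℕ × ℕ, p.getLast? = some st ∧ 0 < st.2}

lemma psi_bij (h00 : (0,0) ∉ S) (hpos : ∀ i, 0 < s i)
    (hhoriz : ∀ a : ℕ, 1 ≤ a → (a, 0) ∈ S) {m : ℕ} (hm : 1 ≤ m) :
    goodSet s S (s m - 1) m \ vertSet s S m =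
      (fun q : List (ℕ × ℕ) => q ++ [(s m - 1 - xPart q q.length, 0)]) ''
        (⋃ w ∈ Finset.range (s m - 1), goodSet s S w m) := by
  ext p
  constructor
  · rintro ⟨⟨⟨hS, hx, hy⟩, hb⟩, hnv⟩
    have hpne : p ≠ [] := by
      intro h
      rw [h] at hy
      simp [yPart_zero] at hy
      omega
    obtain ⟨q, st, rfl⟩ : ∃ q st, p = q ++ [st] := by
      rcases p.eq_nil_or_concat' with h | ⟨q, st, h⟩
      · exact absurd h hpne
      · exact ⟨q, st, h⟩
    have hlast : (q ++ [st]).getLast? = some st := by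
      simp
    have hst2 : st.2 = 0 := by
      by_contra h2
      exact hnv ⟨⟨hS, hx, hy⟩, hb, st, hlast, Nat.pos_of_ne_zero h2⟩
    have hstS : st ∈ S := hS st (by simp)
    have hst1 : 1 ≤ st.1 := by
      rcases Nat.eq_zero_or_pos st.1 with h1 | h1
      · exfalso
        apply h00
        have : st = (0, 0) := by
          rcases st with ⟨a, b⟩
          simp only at h1 hst2
          simp [h1, hst2]
        exact this ▸ hstS
      · exact h1
    have hlen : (q ++ [st]).length = q.length + 1 := by simp
    have hxq : xPart q q.length + st.1 = s m - 1 := by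
      rw [← hx, hlen, xPart_append]
      have h1 : q.length + 1 - q.length = 1 := by omega
      rw [h1, xPart_of_length_le q (Nat.le_succ _)]
      have : xPart [st] 1 = st.1 := by
        have := xPart_cons st [] 0
        simpa [xPart_zero] using this
      rw [this]
    have hyq : yPart q q.length = m := by
      have : yPart q q.length + st.2 = m := by
        rw [← hy, hlen, yPart_append]
        have h1 : q.length + 1 - q.length = 1 := by omega
        rw [h1, yPart_of_length_le q (Nat.le_succ _)]
        have : yPart [st] 1 = st.2 := by
          have := yPart_cons st [] 0
          simpa [yPart_zero] using this
        rw [this]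
      omega
    have hwlt : xPart q q.length < s m - 1 := by
      have := hpos m
      omega
    refine ⟨q, Set.mem_biUnion (show xPart q q.length ∈ Finset.range (s m - 1) by
      simpa using hwlt) ?_, ?_⟩
    · refine ⟨⟨fun st' h => hS st' (by simp [h]), rfl, hyq⟩, ?_⟩
      intro j hj
      have h1 : xPart (q ++ [st]) j = xPart q j := xPart_prefix q [st] hj
      have h2 : yPart (q ++ [st]) j = yPart q j := yPart_prefix q [st] hj
      have := hb j (by rw [hlen]; omega)
      rw [h1, h2] at this
      exact this
    · show q ++ [(s m - 1 - xPart q q.length, 0)] = q ++ [st]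
      have : s m - 1 - xPart q q.length = st.1 := by omega
      rw [this]
      congr 2
      rcases st with ⟨a, b⟩
      simp only at hst2
      simp [hst2]
  · rintro ⟨q, hq, rfl⟩
    obtain ⟨w, hw0, hqg⟩ := Set.mem_iUnion₂.1 hq
    obtain ⟨⟨hS, hx, hy⟩, hb⟩ := hqg
    have hw : w < s m - 1 := by simpa using hw0
    show q ++ [(s m - 1 - xPart q q.length, 0)] ∈ _
    rw [hx]
    set st : ℕ × ℕ := (s m - 1 - w, 0) with hst
    have hst1 : 1 ≤ st.1 := by rw [hst]; simp only; omega
    have hstS : st ∈ S := hhoriz _ hst1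
    have hlen : (q ++ [st]).length = q.length + 1 := by simp
    have hnx : xPart (q ++ [st]) (q.length + 1) = s m - 1 := by
      rw [xPart_append]
      have h1 : q.length + 1 - q.length = 1 := by omega
      rw [h1, xPart_of_length_le q (Nat.le_succ _), hx]
      have h2 : xPart [st] 1 = st.1 := by
        have := xPart_cons st [] 0
        simpa [xPart_zero] using this
      rw [h2, hst]
      simp only
      omega
    have hny : yPart (q ++ [st]) (q.length + 1) = m := by
      rw [yPart_append]
      have h1 : q.length + 1 - q.length = 1 := by omega
      rw [h1, yPart_of_length_le q (Nat.le_succ _), hy]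
      have h2 : yPart [st] 1 = st.2 := by
        have := yPart_cons st [] 0
        simpa [yPart_zero] using this
      rw [h2, hst]
      simp
    refine ⟨⟨⟨?_, by rw [hlen]; exact hnx, by rw [hlen]; exact hny⟩, ?_⟩, ?_⟩
    · intro st' h
      rcases List.mem_append.1 h with h | h
      · exact hS st' h
      · rcases List.mem_singleton.1 h with rfl
        exact hstS
    · intro j hj
      rw [hlen] at hj
      rcases Nat.lt_or_ge j (q.length + 1) with h | h
      · have hjq : j ≤ q.length := by omega
        rw [xPart_prefix q [st] hjq, yPart_prefix q [st] hjq]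
        exact hb j hjq
      · have hj1 : j = q.length + 1 := by omega
        rw [hj1, hnx, hny]
        have := hpos m
        omega
    · intro hv
      obtain ⟨_, _, st', hlast, hpos'⟩ := hv
      rw [List.getLast?_concat] at hlast
      have : st = st' := by injection hlast
      rw [← this, hst] at hpos'
      simp at hpos'

lemma gC_d_eq (h00 : (0,0) ∉ S) (hpos : ∀ i, 0 < s i)
    (hhoriz : ∀ a : ℕ, 1 ≤ a → (a, 0) ∈ S) {m : ℕ} (hm : 1 ≤ m) :
    gC s S m + (vertSet s S m).ncard = 2 * bC s S (s m - 1) m := by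
  classical
  have hvsub : vertSet s S m ⊆ goodSet s S (s m - 1) m := by
    rintro p ⟨h1, h2, _⟩
    exact ⟨h1, h2⟩
  have hgfin := goodSet_finite (s := s) h00 (s m - 1) m
  have hvfin := hgfin.subset hvsub
  -- horizontal part count
  have hinj : Set.InjOn (fun q : List (ℕ × ℕ) => q ++ [(s m - 1 - xPart q q.length, 0)])
      (⋃ w ∈ Finset.range (s m - 1), goodSet s S w m) := by
    intro q _ q' _ heq
    simp only at heq
    have hlen : q.length = q'.length := by
      have := congrArg List.length heq
      simpa using this
    exact (List.append_inj heq hlen).1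
  have hbU : (⋃ w ∈ Finset.range (s m - 1), goodSet s S w m).ncard =
      ∑ w ∈ Finset.range (s m - 1), bC s S w m := by
    rw [ncard_biUnion' _ _ (fun w _ => goodSet_finite h00 w m)
      (fun w _ w' _ h => goodSet_pairwise_disj h)]
    rfl
  have hhoriz_card : (goodSet s S (s m - 1) m \ vertSet s S m).ncard =
      ∑ w ∈ Finset.range (s m - 1), bC s S w m := by
    rw [psi_bij h00 hpos hhoriz hm, Set.ncard_image_of_injOn hinj, hbU]
  have hsplit : bC s S (s m - 1) m =
      (vertSet s S m).ncard + ∑ w ∈ Finset.range (s m - 1), bC s S w m := by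
    have : goodSet s S (s m - 1) m =
        vertSet s S m ∪ (goodSet s S (s m - 1) m \ vertSet s S m) := by
      rw [Set.union_diff_cancel hvsub]
    rw [bC, this, Set.ncard_union_eq (Set.disjoint_sdiff_right) hvfin
      (hgfin.subset Set.diff_subset), hhoriz_card]
  have hgC : gC s S m = ∑ w ∈ Finset.range (s m - 1), bC s S w m + bC s S (s m - 1) m := by
    rw [gC]
    have h1 : s m = (s m - 1) + 1 := by have := hpos m; omega
    rw [h1, Finset.sum_range_succ]
    simp only [Nat.add_sub_cancel]
  omega

lemma bC_zero (h00 : (0,0) ∉ S) (hs0 : s 0 = 1) : bC s S 0 0 = 1 := by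
  rw [bC, goodSet_zero h00 hs0, Set.ncard_singleton]

lemma gC_zero (h00 : (0,0) ∉ S) (hs0 : s 0 = 1) : gC s S 0 = 1 := by
  rw [gC, hs0]
  simp [bC_zero h00 hs0]

lemma vertSet_zero (h00 : (0,0) ∉ S) (hs0 : s 0 = 1) : (vertSet s S 0).ncard = 0 := by
  have : vertSet s S 0 = ∅ := by
    ext p
    simp only [Set.mem_empty_iff_false, iff_false]
    rintro ⟨h1, h2, st, hlast, _⟩
    have hp : p ∈ goodSet s S 0 0 := by
      rw [hs0] at h1
      exact ⟨h1, h2⟩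
    rw [goodSet_zero h00 hs0] at hp
    rw [hp] at hlast
    simp at hlast
  rw [this, Set.ncard_empty]

end lemma2

noncomputable def Wq (S : Set (ℕ × ℕ)) (r L : ℕ) : ℕ := ∑ t ∈ Finset.range (L+1), TCnt S r t

lemma TCnt_zero (S : Set (ℕ × ℕ)) (r : ℕ) : TCnt S r 0 = 0 := by simp [TCnt]

lemma Wq_zero (S : Set (ℕ × ℕ)) (r : ℕ) : Wq S r 0 = 0 := by simp [Wq, TCnt_zero]

lemma Wq_succ (S : Set (ℕ × ℕ)) (r L : ℕ) : Wq S r (L+1) = Wq S r L + TCnt S r (L+1) := by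
  rw [Wq, Finset.sum_range_succ]; rfl

lemma sum_Icc_reflect (f : ℕ → ℕ) (a K : ℕ) :
    ∑ u ∈ Finset.Icc a K, f (K - u) = ∑ j ∈ Finset.range (K + 1 - a), f j := by
  refine Finset.sum_nbij' (fun u => K - u) (fun j => K - j) ?_ ?_ ?_ ?_ ?_
  · intro u hu
    simp only [Finset.mem_Icc] at hu
    simp only [Finset.mem_range]
    omega
  · intro j hj
    simp only [Finset.mem_range] at hj
    simp only [Finset.mem_Icc]
    omega
  · intro u hu
    simp only [Finset.mem_Icc] at hu
    omega
  · intro j hj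
    simp only [Finset.mem_range] at hj
    omega
  · intro u _
    rfl

section assembly
variable {s : ℕ → ℕ} {S : Set (ℕ × ℕ)}

lemma master_sum (h00 : (0,0) ∉ S) (hs0 : s 0 = 1) (hmono : Monotone s)
    (hhoriz : ∀ a : ℕ, 1 ≤ a → (a, 0) ∈ S)
    (hslope : ∀ a b : ℕ, (a, b) ∈ S → 0 < b →
      ∀ i j : ℕ, 1 ≤ j → j ≤ b → j * a < b * (s (i + j) - s i + 1))
    (n K : ℕ) :
    TCnt S n K = ∑ x ∈ Finset.range K, bC s S x n +
      ∑ m ∈ Finset.range (n+1), gC s S m * Wq S (n-m) (K - s m) := by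
  induction K with
  | zero =>
    rw [TCnt_zero]
    simp only [Finset.range_zero, Finset.sum_empty, zero_add, Nat.zero_sub, Wq_zero,
      mul_zero, Finset.sum_const_zero, add_zero]
  | succ K ih =>
    rw [TCnt, Finset.sum_range_succ, ← TCnt, ih,
      master_pointwise h00 hs0 hmono hhoriz hslope K n]
    have hW : ∀ m, Wq S (n-m) (K + 1 - s m) =
        Wq S (n-m) (K - s m) + ∑ u ∈ Finset.Icc (s m) K, aCount S (K - u) (n - m) := by
      intro m
      rcases le_or_gt (s m) K with h | h
      · have h1 : K + 1 - s m = (K - s m) + 1 := by omega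
        rw [h1, Wq_succ]
        congr 1
        have e : K - s m + 1 = K + 1 - s m := by omega
        rw [TCnt, e, ← sum_Icc_reflect (fun j => aCount S j (n - m)) (s m) K]
      · have h1 : K + 1 - s m = 0 ∨ K + 1 - s m = K - s m := by omega
        have h2 : Finset.Icc (s m) K = ∅ := by
          rw [Finset.Icc_eq_empty_iff]
          omega
        rw [h2, Finset.sum_empty, add_zero]
        rcases h1 with h1 | h1
        · rw [h1, Wq_zero]
          have h3 : K - s m = 0 := by omega
          rw [h3, Wq_zero]
        · rw [h1]
    have hsum : ∑ m ∈ Finset.range (n+1), gC s S m * Wq S (n-m) (K + 1 - s m) =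
        ∑ m ∈ Finset.range (n+1), gC s S m * Wq S (n-m) (K - s m) +
        ∑ m ∈ Finset.range (n+1), gC s S m *
          ∑ u ∈ Finset.Icc (s m) K, aCount S (K - u) (n - m) := by
      rw [← Finset.sum_add_distrib]
      refine Finset.sum_congr rfl (fun m _ => ?_)
      rw [hW m, mul_add]
    rw [hsum, Finset.sum_range_succ (fun x => bC s S x n) K]
    simp only [Finset.mul_sum]
    ring

lemma step_B (h00 : (0,0) ∉ S) (hs0 : s 0 = 1) (hpos : ∀ i, 0 < s i) (hmono : Monotone s)
    (hhoriz : ∀ a : ℕ, 1 ≤ a → (a, 0) ∈ S)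
    (hslope : ∀ a b : ℕ, (a, b) ∈ S → 0 < b →
      ∀ i j : ℕ, 1 ≤ j → j ≤ b → j * a < b * (s (i + j) - s i + 1))
    (n : ℕ) :
    TCnt S n (s n) = bC s S (s n - 1) n + TCnt S n (s n - 1) +
      ∑ m ∈ Finset.range (n+1), gC s S m * TCnt S (n-m) (s n - s m) := by
  have h1 := master_sum h00 hs0 hmono hhoriz hslope n (s n)
  have h2 := master_sum h00 hs0 hmono hhoriz hslope n (s n - 1)
  have hW : ∀ m, Wq S (n-m) (s n - s m) =
      TCnt S (n-m) (s n - s m) + Wq S (n-m) (s n - 1 - s m) := by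
    intro m
    rcases le_or_gt (s n) (s m) with h | h
    · have e1 : s n - s m = 0 := by omega
      have e2 : s n - 1 - s m = 0 := by omega
      rw [e1, e2, Wq_zero, TCnt_zero]
    · have e1 : s n - s m = (s n - 1 - s m) + 1 := by omega
      rw [e1, Wq_succ, add_comm]
  have hbsum : ∑ x ∈ Finset.range (s n), bC s S x n =
      ∑ x ∈ Finset.range (s n - 1), bC s S x n + bC s S (s n - 1) n := by
    have e : s n = (s n - 1) + 1 := by have := hpos n; omega
    rw [e, Finset.sum_range_succ]
    simp only [Nat.add_sub_cancel]
  rw [h1, hbsum]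
  have hWsum : ∑ m ∈ Finset.range (n+1), gC s S m * Wq S (n-m) (s n - s m) =
      ∑ m ∈ Finset.range (n+1), gC s S m * TCnt S (n-m) (s n - s m) +
      ∑ m ∈ Finset.range (n+1), gC s S m * Wq S (n-m) (s n - 1 - s m) := by
    rw [← Finset.sum_add_distrib]
    refine Finset.sum_congr rfl (fun m _ => ?_)
    rw [hW m, mul_add]
  rw [hWsum, h2]
  ring

end assembly


theorem stmt1 (s : ℕ → ℕ) (hmono : Monotone s) (hpos : ∀ i, 0 < s i) (hs0 : s 0 = 1)
    (S : Set (ℕ × ℕ)) (h00 : (0, 0) ∉ S)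
    (hhoriz : ∀ a : ℕ, 1 ≤ a → (a, 0) ∈ S)
    (hslope : ∀ a b : ℕ, (a, b) ∈ S → 0 < b →
      ∀ i j : ℕ, 1 ≤ j → j ≤ b → j * a < b * (s (i + j) - s i + 1))
    (pB d : ℕ → ℕ)
    (hp : ∀ m, pB m =
      Set.ncard {p : List (ℕ × ℕ) | IsPath S (s m - 1) m p ∧ HasBoundary s p})
    (hd : ∀ m, d m =
      Set.ncard {p : List (ℕ × ℕ) | IsPath S (s m - 1) m p ∧ HasBoundary s p ∧
        ∃ st : ℕ × ℕ, p.getLast? = some st ∧ 0 < st.2})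
    (n : ℕ) (hn : 1 ≤ n) :
    (∑ j ∈ Finset.range (s n), (aCount S j n : ℤ)) =
      (pB n : ℤ) + ∑ m ∈ Finset.range n,
        (2 * (pB m : ℤ) - (d m : ℤ)) *
          ∑ j ∈ Finset.range (s n - s m), (aCount S j (n - m) : ℤ) := by
  have hpB : ∀ m, pB m = bC s S (s m - 1) m := fun m => hp m
  have hd' : ∀ m, d m = (vertSet s S m).ncard := fun m => hd m
  have hcast : ∀ r K, ((TCnt S r K : ℕ) : ℤ) = ∑ j ∈ Finset.range K, (aCount S j r : ℤ) := by
    intro r K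
    show ((∑ j ∈ Finset.range K, aCount S j r : ℕ) : ℤ) = _
    push_cast
    rfl
  have hB := step_B (s := s) (S := S) h00 hs0 hpos hmono hhoriz hslope n
  have hg : ∀ m, 1 ≤ m → (2 * (pB m : ℤ) - d m) = (gC s S m : ℤ) := by
    intro m hm
    have h1 := gC_d_eq (s := s) (S := S) h00 hpos hhoriz hm
    rw [← hpB m] at h1
    rw [← hd' m] at h1
    omega
  have hp0 : pB 0 = 1 := by
    have e : s 0 - 1 = 0 := by omega
    rw [hpB 0, e]
    exact bC_zero h00 hs0
  have hd0 : d 0 = 0 := by rw [hd' 0]; exact vertSet_zero h00 hs0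
  have key : ∀ m ∈ Finset.range n, (2 * (pB m : ℤ) - (d m : ℤ)) *
      (∑ j ∈ Finset.range (s n - s m), (aCount S j (n - m) : ℤ))
      = (gC s S m : ℤ) * (∑ j ∈ Finset.range (s n - s m), (aCount S j (n - m) : ℤ))
        + (if m = 0 then ∑ j ∈ Finset.range (s n - 1), (aCount S j n : ℤ) else 0) := by
    intro m _
    rcases Nat.eq_zero_or_pos m with rfl | hm1
    · rw [hp0, hd0, gC_zero h00 hs0, hs0, if_pos rfl]
      push_cast
      simp only [Nat.sub_zero]
      ring
    · rw [hg m hm1, if_neg (by omega)]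
      ring
  have hsplit : ∑ m ∈ Finset.range n, (2 * (pB m : ℤ) - (d m : ℤ)) *
      (∑ j ∈ Finset.range (s n - s m), (aCount S j (n - m) : ℤ))
      = ∑ m ∈ Finset.range n,
          (gC s S m : ℤ) * (∑ j ∈ Finset.range (s n - s m), (aCount S j (n - m) : ℤ))
        + ∑ j ∈ Finset.range (s n - 1), (aCount S j n : ℤ) := by
    rw [Finset.sum_congr rfl key, Finset.sum_add_distrib]
    congr 1
    rw [Finset.sum_ite_eq' (Finset.range n) 0
      (fun _ => ∑ j ∈ Finset.range (s n - 1), (aCount S j n : ℤ))]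
    rw [if_pos (Finset.mem_range.2 (by omega))]
  rw [← hcast n (s n), hsplit]
  have hTm : ∀ m, (∑ j ∈ Finset.range (s n - s m), (aCount S j (n - m) : ℤ))
      = ((TCnt S (n - m) (s n - s m) : ℕ) : ℤ) := fun m => (hcast (n - m) (s n - s m)).symm
  rw [Finset.sum_congr rfl (fun m _ => by rw [hTm m]), ← hcast n (s n - 1)]
  zify at hB
  rw [hB, hpB n, Finset.sum_range_succ]
  have hz : (gC s S n : ℤ) * ((TCnt S (n - n) (s n - s n) : ℕ) : ℤ) = 0 := by
    simp [TCnt_zero]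
  rw [hz]
  push_cast
  ring
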